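/- Let p ∈ (0,1] and let T_{c,n} be random vectors whose laws are H_n(B) = ∑_{k=0}^n C(n,k) p^k (1-p)^{n-k} R_k(B), where R_k are Borel probability measures on ℝ^m. If R_n converges weakly to the Dirac measure at 0, then T_{c,n} converges in probability to 0, i.e., for every ε > 0, H_n({x : ‖x‖ > ε}) → 0. -/

import Mathlib

open MeasureTheory ENNReal BoundedContinuousFunction Filter

private lemma real_weight_tendsto_zero (k : ℕ) {a q : ℝ} (ha0 : 0 ≤ a) (ha1 : a ≤ 1)
    (hq0 : 0 ≤ q) (hq1 : q < 1) :
    Tendsto (fun n : ℕ => (n.choose k : ℝ) * a ^ k * q ^ (n - k)) atTop (nhds 0) := by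
  have hmain : Tendsto (fun n : ℕ => (n : ℝ) ^ k * q ^ (n - k)) atTop (nhds 0) := by
    rcases eq_or_lt_of_le hq0 with hq|hq
    · -- q = 0
      apply Tendsto.congr' _ tendsto_const_nhds
      filter_upwards [eventually_ge_atTop (k + 1)] with n hn
      rw [← hq, zero_pow (by omega), mul_zero]
    · -- q > 0
      have h := (tendsto_pow_const_mul_const_pow_of_lt_one k hq0 hq1).const_mul ((q ^ k)⁻¹)
      rw [mul_zero] at h
      apply h.congr'
      filter_upwards [eventually_ge_atTop k] with n hn
      have : q ^ (n - k) * q ^ k = q ^ n := by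
        rw [← pow_add]; congr 1; omega
      field_simp
      rw [mul_comm ((n:ℝ)^k), ← this]
      ring
  apply squeeze_zero (fun n => by positivity) _ hmain
  intro n
  have h1 : (n.choose k : ℝ) ≤ (n : ℝ) ^ k := by
    exact_mod_cast Nat.cast_le.mpr (Nat.choose_le_pow n k) |>.trans_eq (by push_cast; rfl)
  have h2 : a ^ k ≤ 1 := pow_le_one₀ ha0 ha1
  calc (n.choose k : ℝ) * a ^ k * q ^ (n - k)
      ≤ (n : ℝ) ^ k * 1 * q ^ (n - k) := by
        apply mul_le_mul _ le_rfl (by positivity) (by positivity)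
        exact mul_le_mul h1 h2 (by positivity) (by positivity)
    _ = (n : ℝ) ^ k * q ^ (n - k) := by ring

/-- Corollary (c) of Koul, Müller and Schick: if `R_n` converges weakly to the
Dirac measure at `0`, then random vectors `T_{c,n}` with laws given by the binomial
mixtures `H_n = ∑_{k=0}^n C(n,k) p^k (1-p)^{n-k} R_k` converge in probability to `0`,
i.e., for every `ε > 0`, `H_n {x : ‖x‖ > ε} → 0`. -/
theorem binomial_mixture_convergence_in_probability
    {m : ℕ} (p : ℝ≥0∞) (hp0 : 0 < p) (hp1 : p ≤ 1)
    (R : ℕ → Measure (Fin m → ℝ)) (hRprob : ∀ k, IsProbabilityMeasure (R k))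
    (H : ℕ → Measure (Fin m → ℝ))
    (hH : ∀ n, H n = ∑ k ∈ Finset.range (n + 1),
      ((n.choose k : ℝ≥0∞) * p ^ k * (1 - p) ^ (n - k)) • R k)
    -- weak convergence of `R_n` to the Dirac measure at `0`
    (hR0 : ∀ f : (Fin m → ℝ) →ᵇ ℝ,
      Filter.Tendsto (fun n => ∫ x, f x ∂(R n)) Filter.atTop
        (nhds (∫ x, f x ∂(Measure.dirac (0 : Fin m → ℝ))))) :
    -- convergence in probability of `T_{c,n}` to `0`
    ∀ ε : ℝ, 0 < ε →
      Filter.Tendsto (fun n => H n {x | ε < ‖x‖}) Filter.atTop (nhds 0) := by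
  intro ε hε
  set S : Set (Fin m → ℝ) := {x | ε < ‖x‖} with hS_def
  -- Step 1: R k S → 0
  set ν : ℕ → ProbabilityMeasure (Fin m → ℝ) := fun k => ⟨R k, hRprob k⟩ with hν
  set νlim : ProbabilityMeasure (Fin m → ℝ) :=
    ⟨Measure.dirac 0, Measure.dirac.isProbabilityMeasure⟩ with hνlim
  have hνtend : Tendsto ν atTop (nhds νlim) := by
    rw [ProbabilityMeasure.tendsto_iff_forall_integral_tendsto]
    intro f
    exact hR0 f
  have hFclosed : IsClosed {x : Fin m → ℝ | ε ≤ ‖x‖} := by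
    have : {x : Fin m → ℝ | ε ≤ ‖x‖} = (norm ⁻¹' Set.Ici ε) := rfl
    rw [this]; exact isClosed_Ici.preimage continuous_norm
  have hlimsup : (atTop.limsup fun k => (ν k : Measure (Fin m → ℝ)) {x | ε ≤ ‖x‖}) ≤
      (νlim : Measure (Fin m → ℝ)) {x | ε ≤ ‖x‖} :=
    ProbabilityMeasure.limsup_measure_closed_le_of_tendsto hνtend hFclosed
  have hdirac : (νlim : Measure (Fin m → ℝ)) {x | ε ≤ ‖x‖} = 0 := by
    rw [hνlim]
    simp only [ProbabilityMeasure.coe_mk]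
    rw [Measure.dirac_apply' _ hFclosed.measurableSet]
    simp only [Set.indicator_apply, Set.mem_setOf_eq, norm_zero]
    rw [if_neg (not_le.mpr hε)]
  have hcle : Tendsto (fun k => (R k) {x | ε ≤ ‖x‖}) atTop (nhds 0) := by
    have h1 : (atTop.limsup fun k => (R k) {x | ε ≤ ‖x‖}) ≤ 0 := hdirac ▸ hlimsup
    refine tendsto_of_le_liminf_of_limsup_le ?_ h1
    exact le_trans (zero_le) (le_refl _)
  have hc : Tendsto (fun k => (R k) S) atTop (nhds 0) := by
    refine tendsto_of_tendsto_of_tendsto_of_le_of_le tendsto_const_nhds hcle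
      (fun k => zero_le) (fun k => measure_mono ?_)
    intro x hx
    simp only [hS_def, Set.mem_setOf_eq] at hx ⊢
    exact le_of_lt hx
  have hc1 : ∀ k, (R k) S ≤ 1 := fun k => prob_le_one
  -- weights
  set w : ℕ → ℕ → ℝ≥0∞ := fun n k => (n.choose k : ℝ≥0∞) * p ^ k * (1 - p) ^ (n - k) with hw
  have hw_sum : ∀ n, ∑ k ∈ Finset.range (n + 1), w n k = 1 := by
    intro n
    have hbin := add_pow p (1 - p) n
    rw [add_tsub_cancel_of_le hp1, one_pow] at hbin
    refine (Finset.sum_congr rfl fun k _ => ?_).trans hbin.symm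
    rw [hw]; ring
  -- Step 2: each fixed weight tends to 0
  have hp_top : p ≠ ⊤ := (hp1.trans_lt one_lt_top).ne
  set P : NNReal := p.toNNReal with hP
  have hpP : p = (P : ℝ≥0∞) := (ENNReal.coe_toNNReal hp_top).symm
  have hP1 : P ≤ 1 := by
    rw [← ENNReal.coe_le_one_iff, ← hpP]; exact hp1
  have hw_single : ∀ k, Tendsto (fun n => w n k) atTop (nhds 0) := by
    intro k
    have heq : ∀ n, w n k = ((n.choose k * P ^ k * (1 - P) ^ (n - k) : NNReal) : ℝ≥0∞) := by
      intro n
      rw [hw]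
      push_cast [hpP]
      norm_cast
    simp only [heq]
    rw [← ENNReal.coe_zero, ENNReal.tendsto_coe]
    rw [← NNReal.tendsto_coe]
    push_cast
    have h1P : ((1 - P : NNReal) : ℝ) = 1 - (P : ℝ) := by
      rw [NNReal.coe_sub hP1, NNReal.coe_one]
    simp only [h1P]
    exact real_weight_tendsto_zero k P.coe_nonneg (by exact_mod_cast hP1)
      (by simp [sub_nonneg]; exact_mod_cast hP1)
      (by
        have : (0 : ℝ) < P := by exact_mod_cast (ENNReal.toNNReal_pos hp0.ne' hp_top)
        linarith)
  -- Step 3: conclude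
  have hS_meas : MeasurableSet S := by
    have : S = (norm ⁻¹' Set.Ioi ε) := rfl
    rw [this]; exact (isOpen_Ioi.preimage continuous_norm).measurableSet
  have hHS : ∀ n, H n S = ∑ k ∈ Finset.range (n + 1), w n k * (R k) S := by
    intro n
    rw [hH n]
    rw [Measure.finset_sum_apply _ _ _]
    apply Finset.sum_congr rfl
    intro k _
    rw [Measure.smul_apply, smul_eq_mul]
  rw [ENNReal.tendsto_atTop_zero]
  intro δ hδ
  have hδ2 : (0 : ℝ≥0∞) < δ / 2 := ENNReal.half_pos hδ.ne'
  -- choose K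
  obtain ⟨K, hK⟩ := (hc.eventually_lt_const hδ2).exists_forall_of_atTop
  -- first block eventually small
  have hblock : Tendsto (fun n => ∑ k ∈ Finset.range K, w n k) atTop (nhds 0) := by
    have := tendsto_finset_sum (Finset.range K) (fun k _ => hw_single k)
    simpa using this
  obtain ⟨N, hN⟩ := (hblock.eventually_lt_const hδ2).exists_forall_of_atTop
  refine ⟨max N K, fun n hn => ?_⟩
  have hnN : N ≤ n := le_trans (le_max_left _ _) hn
  have hnK : K ≤ n := le_trans (le_max_right _ _) hn
  have hsplit : Finset.range (n + 1) = Finset.range K ∪ Finset.Ico K (n + 1) := by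
    rw [Finset.range_eq_Ico, Finset.range_eq_Ico, Finset.Ico_union_Ico_eq_Ico (by omega) (by omega)]
  calc H n S = ∑ k ∈ Finset.range (n + 1), w n k * (R k) S := hHS n
    _ = ∑ k ∈ Finset.range K, w n k * (R k) S + ∑ k ∈ Finset.Ico K (n + 1), w n k * (R k) S := by
        rw [hsplit, Finset.sum_union]
        rw [Finset.range_eq_Ico]
        exact Finset.Ico_disjoint_Ico_consecutive 0 K (n + 1)
    _ ≤ ∑ k ∈ Finset.range K, w n k * 1 + ∑ k ∈ Finset.Ico K (n + 1), w n k * (δ / 2) := by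
        gcongr with k hk k hk
        · exact hc1 k
        · exact (hK k (Finset.mem_Ico.mp hk).1).le
    _ ≤ δ / 2 + (∑ k ∈ Finset.Ico K (n + 1), w n k) * (δ / 2) := by
        gcongr
        · simp only [mul_one]
          exact (hN n hnN).le
        · rw [Finset.sum_mul]
    _ ≤ δ / 2 + 1 * (δ / 2) := by
        gcongr
        calc ∑ k ∈ Finset.Ico K (n + 1), w n k
            ≤ ∑ k ∈ Finset.range (n + 1), w n k := by
              rw [hsplit]
              exact Finset.sum_le_sum_of_subset Finset.subset_union_right
          _ = 1 := hw_sum n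
    _ = δ := by rw [one_mul, ENNReal.add_halves]
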